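/- Let π : X → Y be an open factor map of topological dynamical systems with (Y,T) transitive. Suppose U₁,…,U_d, V₁,…,V_e ⊆ X are nonempty open sets with π U₁ ∩ ⋯ ∩ π U_d ≠ ∅ and π V₁ ∩ ⋯ ∩ π V_e ≠ ∅, and let p ∈ Pol_d, q ∈ Pol_e. Then there exist nonempty open sets W₁,…,W_{d+e} ⊆ X with π W₁ ∩ ⋯ ∩ π W_{d+e} ≠ ∅ and a tuple r ∈ Pol_{d+e} such that R_r(W₁,…,W_{d+e}) ⊆ R_p(U₁,…,U_d) ∩ R_q(V₁,…,V_e). -/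

import Mathlib

/-- The return-time set `R_p(U₁,…,U_d)` along a polynomial tuple. -/
def returnTimes {α : Type*} (T : Equiv.Perm α) {d : ℕ} (p : Fin d → Polynomial ℤ)
    (U : Fin d → Set α) : Set ℤ :=
  {n : ℤ | ∃ x : α, ∀ i : Fin d, (T ^ (p i).eval n) x ∈ U i}

/-- `Pol_d`: tuples of pairwise distinct integer polynomials vanishing at `0`. -/
def MemPol {d : ℕ} (p : Fin d → Polynomial ℤ) : Prop :=
  (∀ i, (p i).eval 0 = 0) ∧ ∀ i j : Fin d, i ≠ j → p i ≠ p j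

/-- A system `(β, S)` is (topologically) transitive if any two nonempty open sets
can be moved to intersect. -/
def IsTransitiveSystem {β : Type*} [TopologicalSpace β] (S : Equiv.Perm β) : Prop :=
  ∀ A B : Set β, IsOpen A → A.Nonempty → IsOpen B → B.Nonempty →
    ∃ n : ℤ, (A ∩ (fun y => (S ^ n) y) ⁻¹' B).Nonempty

theorem stmt_8 {α β : Type*} [MetricSpace α] [CompactSpace α]
    [MetricSpace β] [CompactSpace β]
    (T : Equiv.Perm α) (hT : Continuous T) (hT' : Continuous T.symm)
    (S : Equiv.Perm β) (hS : Continuous S) (hS' : Continuous S.symm)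
    (htr : IsTransitiveSystem S)
    (π : α → β) (hπc : Continuous π) (hπs : Function.Surjective π)
    (hπe : π ∘ T = S ∘ π) (hπo : IsOpenMap π)
    {d e : ℕ} (U : Fin d → Set α) (V : Fin e → Set α)
    (hUne : ∀ i, (U i).Nonempty) (hUop : ∀ i, IsOpen (U i))
    (hVne : ∀ i, (V i).Nonempty) (hVop : ∀ i, IsOpen (V i))
    (hU : (⋂ i, π '' U i).Nonempty) (hV : (⋂ i, π '' V i).Nonempty)
    (p : Fin d → Polynomial ℤ) (hp : MemPol p)
    (q : Fin e → Polynomial ℤ) (hq : MemPol q) :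
    ∃ (W : Fin (d + e) → Set α) (r : Fin (d + e) → Polynomial ℤ),
      (∀ i, (W i).Nonempty) ∧ (∀ i, IsOpen (W i)) ∧
      (⋂ i, π '' W i).Nonempty ∧ MemPol r ∧
      returnTimes T r W ⊆ returnTimes T p U ∩ returnTimes T q V := by
  classical
  -- equivariance for integer powers
  have h1 : ∀ x, π (T x) = S (π x) := fun x => congrFun hπe x
  have hcomm : ∀ (k : ℤ) (x : α), π ((T ^ k) x) = (S ^ k) (π x) := by
    intro k
    induction k using Int.induction_on with
    | zero => simp
    | succ n ih =>
      intro x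
      have hTp : (T ^ ((n : ℤ) + 1)) x = (T ^ (n : ℤ)) (T x) := by
        rw [zpow_add_one]; rfl
      have hSp : (S ^ ((n : ℤ) + 1)) (π x) = (S ^ (n : ℤ)) (S (π x)) := by
        rw [zpow_add_one]; rfl
      rw [hTp, hSp, ih (T x), h1]
    | pred n ih =>
      intro x
      have hTp : (T ^ (-(n : ℤ) - 1)) x = (T ^ (-(n : ℤ))) (T⁻¹ x) := by
        rw [zpow_sub_one]; rfl
      have hSp : (S ^ (-(n : ℤ) - 1)) (π x) = (S ^ (-(n : ℤ))) (S⁻¹ (π x)) := by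
        rw [zpow_sub_one]; rfl
      have hinv : π (T⁻¹ x) = S⁻¹ (π x) := by
        have := h1 (T⁻¹ x)
        have h2 : T (T⁻¹ x) = x := by simp
        rw [h2] at this
        rw [this]; simp
      rw [hTp, hSp, ih (T⁻¹ x), hinv]
  have hcont : ∀ k : ℤ, Continuous ⇑(T ^ k) := by
    intro k
    induction k using Int.induction_on with
    | zero => simpa using continuous_id
    | succ n ih =>
      have : ⇑(T ^ ((n : ℤ) + 1)) = ⇑(T ^ (n : ℤ)) ∘ ⇑T := by
        funext x; rw [zpow_add_one]; rfl
      rw [this]; exact ih.comp hT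
    | pred n ih =>
      have : ⇑(T ^ (-(n : ℤ) - 1)) = ⇑(T ^ (-(n : ℤ))) ∘ ⇑T.symm := by
        funext x; rw [zpow_sub_one]; rfl
      rw [this]; exact ih.comp hT'
  have hpow : ∀ (a b : ℤ) (x : α), (T ^ a) ((T ^ b) x) = (T ^ (a + b)) x := by
    intro a b x; rw [zpow_add]; rfl
  -- transitivity gives a time m
  have hAop : IsOpen (⋂ i, π '' U i) := isOpen_iInter_of_finite fun i => hπo _ (hUop i)
  have hBop : IsOpen (⋂ i, π '' V i) := isOpen_iInter_of_finite fun i => hπo _ (hVop i)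
  obtain ⟨m, z, hzA, hzB⟩ := htr _ _ hAop hU hBop hV
  -- choose c avoiding degree-1 coefficients of the differences
  obtain ⟨c, hc⟩ := Infinite.exists_notMem_finset
    (Finset.image (fun ij : Fin d × Fin e => (p ij.1 - q ij.2).coeff 1) Finset.univ)
  refine ⟨Fin.addCases U (fun j => ⇑(T ^ m) ⁻¹' V j),
    Fin.addCases p (fun j => q j + Polynomial.C c * Polynomial.X), ?_, ?_, ?_, ?_, ?_⟩
  · intro i
    induction i using Fin.addCases with
    | left i => simpa using hUne i
    | right j =>
      obtain ⟨v, hv⟩ := hVne j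
      exact ⟨(T ^ m)⁻¹ v, by simpa using hv⟩
  · intro i
    induction i using Fin.addCases with
    | left i => simpa using hUop i
    | right j => simpa using (hVop j).preimage (hcont m)
  · refine ⟨z, Set.mem_iInter.2 fun i => ?_⟩
    induction i using Fin.addCases with
    | left i => simpa using Set.mem_iInter.1 hzA i
    | right j =>
      obtain ⟨v, hvV, hvz⟩ := Set.mem_iInter.1 hzB j
      refine ⟨(T ^ m)⁻¹ v, by simpa using hvV, ?_⟩
      have h2 : π ((T ^ m) ((T ^ m)⁻¹ v)) = (S ^ m) (π ((T ^ m)⁻¹ v)) :=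
        hcomm m _
      have h3 : (T ^ m) ((T ^ m)⁻¹ v) = v := by simp
      rw [h3] at h2
      have h4 : (S ^ m) (π ((T ^ m)⁻¹ v)) = (S ^ m) z := by rw [← h2, hvz]
      exact (S ^ m).injective h4
  · constructor
    · intro i
      induction i using Fin.addCases with
      | left i => simpa using hp.1 i
      | right j => simp [hq.1 j]
    · intro i j hne
      induction i using Fin.addCases with
      | left i =>
        induction j using Fin.addCases with
        | left j =>
          simp only [Fin.addCases_left]
          exact hp.2 i j (fun h => hne (by rw [h]))
        | right j =>
          simp only [Fin.addCases_left, Fin.addCases_right]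
          intro h
          apply hc
          refine Finset.mem_image.2 ⟨(i, j), Finset.mem_univ _, ?_⟩
          have : p i - q j = Polynomial.C c * Polynomial.X := by
            rw [h]; ring
          rw [this]; simp
      | right i =>
        induction j using Fin.addCases with
        | left j =>
          simp only [Fin.addCases_left, Fin.addCases_right]
          intro h
          apply hc
          refine Finset.mem_image.2 ⟨(j, i), Finset.mem_univ _, ?_⟩
          have : p j - q i = Polynomial.C c * Polynomial.X := by
            rw [← h]; ring
          rw [this]; simp
        | right j =>
          simp only [Fin.addCases_right]
          intro h
          exact hq.2 i j (fun h' => hne (by rw [h'])) (by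
            have := add_right_cancel h
            exact this)
  · rintro n ⟨x, hx⟩
    constructor
    · refine ⟨x, fun i => ?_⟩
      have := hx (Fin.castAdd e i)
      simpa using this
    · refine ⟨(T ^ (c * n + m)) x, fun j => ?_⟩
      have hj := hx (Fin.natAdd d j)
      simp only [Fin.addCases_right, Polynomial.eval_add, Polynomial.eval_mul,
        Polynomial.eval_C, Polynomial.eval_X, Set.mem_preimage] at hj
      -- hj : (T ^ m) ((T ^ ((q j).eval n + c * n)) x) ∈ V j
      have h5 : (T ^ (q j).eval n) ((T ^ (c * n + m)) x)
          = (T ^ m) ((T ^ ((q j).eval n + c * n)) x) := by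
        rw [hpow, hpow]
        congr 1
        ring
      rw [h5]
      exact hj
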